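/- Let μ be three times continuously differentiable on [0,1], non-negative, not identically zero, with μ(1) ≠ 0. Then the kernel k(s) = ∫₀¹ (s^{−α}/Γ(1−α)) μ(α) dα is differentiable on (0,∞) and its derivative satisfies k′(s) ∼ −s^{−2}(log s)^{−2} μ(1) as s → 0⁺, i.e. lim_{s→0⁺} s² (log s)² k′(s) = −μ(1). -/

import Mathlib

open MeasureTheory Filter Set

/-- The kernel `k(s) = ∫₀¹ s^{-α}/Γ(1-α) · μ(α) dα`. -/
noncomputable def kker (μ : ℝ → ℝ) (s : ℝ) : ℝ :=
  ∫ α in (0:ℝ)..1, s ^ (-α) / Real.Gamma (1 - α) * μ α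

section KkerAux

open Topology

lemma continuous_gammaInv : Continuous fun x : ℝ => (Real.Gamma x)⁻¹ := by
  have h : ∀ x : ℝ, (Real.Gamma x)⁻¹ = ((Complex.Gamma (x:ℂ))⁻¹).re := by
    intro x; rw [Complex.Gamma_ofReal, ← Complex.ofReal_inv, Complex.ofReal_re]
  simp only [h]
  exact Complex.continuous_re.comp
    (Complex.differentiable_one_div_Gamma.continuous.comp Complex.continuous_ofReal)

lemma gammaInv_eq (t : ℝ) : (Real.Gamma t)⁻¹ = t * (Real.Gamma (t + 1))⁻¹ := by
  rcases eq_or_ne t 0 with rfl | ht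
  · simp [Real.Gamma_zero]
  · rw [Real.Gamma_add_one ht, mul_inv, ← mul_assoc, mul_inv_cancel₀ ht, one_mul]

lemma integral_exp_neg_mul_id {L : ℝ} (hL : L ≠ 0) (b : ℝ) :
    ∫ t in (0:ℝ)..b, Real.exp (-(L * t)) * t
      = (1 - Real.exp (-(L * b)) * (L * b + 1)) / L ^ 2 := by
  have key : ∀ t : ℝ, HasDerivAt (fun t => -Real.exp (-(L * t)) * (t / L + 1 / L ^ 2))
      (Real.exp (-(L * t)) * t) t := by
    intro t
    have h1 : HasDerivAt (fun t : ℝ => -(L * t)) (-L) t := by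
      have h := ((hasDerivAt_id' t).const_mul L).neg
      exact h.congr_deriv (by ring)
    have h2 : HasDerivAt (fun t : ℝ => Real.exp (-(L * t))) (Real.exp (-(L * t)) * (-L)) t :=
      h1.exp
    have h3 : HasDerivAt (fun t : ℝ => t / L + 1 / L ^ 2) (1 / L) t := by
      have h := ((hasDerivAt_id t).div_const L).add_const (1 / L ^ 2)
      simpa only [id_eq, one_div] using h
    have : HasDerivAt (fun t => -Real.exp (-(L * t)) * (t / L + 1 / L ^ 2))
      (-(Real.exp (-(L * t)) * -L) * (t / L + 1 / L ^ 2) + -Real.exp (-(L * t)) * (1 / L)) t :=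
      (h2.neg.mul h3)
    convert this using 1
    field_simp
    ring
  rw [intervalIntegral.integral_eq_sub_of_hasDerivAt (fun t _ => key t)
    (by apply Continuous.intervalIntegrable; continuity)]
  simp only [mul_zero, neg_zero, Real.exp_zero]
  field_simp
  ring

lemma contOn_piece {q : ℝ → ℝ} (hq : ContinuousOn q (Icc 0 1)) (L : ℝ) {a b : ℝ}
    (ha : a ∈ Icc (0:ℝ) 1) (hb : b ∈ Icc (0:ℝ) 1) :
    IntervalIntegrable (fun t => |Real.exp (-(L * t)) * (t * (q t - q 0))|) volume a b := by
  apply ContinuousOn.intervalIntegrable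
  have hsub : uIcc a b ⊆ Icc 0 1 := by
    rw [← uIcc_of_le (zero_le_one' ℝ)]
    exact uIcc_subset_uIcc (by rw [uIcc_of_le (zero_le_one' ℝ)]; exact ha)
      (by rw [uIcc_of_le (zero_le_one' ℝ)]; exact hb)
  apply ContinuousOn.abs
  exact ((Real.continuous_exp.comp (continuous_const.mul continuous_id).neg).continuousOn).mul
    (continuousOn_id.mul ((hq.sub continuousOn_const).mono hsub))

lemma laplace_main {q : ℝ → ℝ} (hq : ContinuousOn q (Icc 0 1)) :
    Tendsto (fun L : ℝ => L ^ 2 * ∫ t in (0:ℝ)..1, Real.exp (-(L * t)) * (t * q t))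
      atTop (𝓝 (q 0)) := by
  obtain ⟨M, hM⟩ := isCompact_Icc.exists_bound_of_continuousOn
    (show ContinuousOn (fun t => q t - q 0) (Icc 0 1) from hq.sub continuousOn_const)
  have h01 : (0:ℝ) ∈ Icc (0:ℝ) 1 := by simp
  have h11 : (1:ℝ) ∈ Icc (0:ℝ) 1 := by simp
  have hM0 : 0 ≤ M := le_trans (by simp) (hM 0 h01)
  -- split the integral
  have hintJ : ∀ L : ℝ, IntervalIntegrable (fun t => Real.exp (-(L * t)) * t) volume 0 1 := by
    intro L
    exact ((Real.continuous_exp.comp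
      ((continuous_const.mul continuous_id).neg)).mul continuous_id).intervalIntegrable _ _
  have hintR : ∀ L : ℝ, IntervalIntegrable
      (fun t => Real.exp (-(L * t)) * (t * (q t - q 0))) volume 0 1 := by
    intro L
    apply ContinuousOn.intervalIntegrable
    rw [uIcc_of_le (zero_le_one' ℝ)]
    exact ((Real.continuous_exp.comp (continuous_const.mul continuous_id).neg).continuousOn).mul
      (continuousOn_id.mul (hq.sub continuousOn_const))
  have hsplit : ∀ L : ℝ, L ^ 2 * ∫ t in (0:ℝ)..1, Real.exp (-(L * t)) * (t * q t)
      = q 0 * (L ^ 2 * ∫ t in (0:ℝ)..1, Real.exp (-(L * t)) * t)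
        + L ^ 2 * ∫ t in (0:ℝ)..1, Real.exp (-(L * t)) * (t * (q t - q 0)) := by
    intro L
    have heq : (fun t => Real.exp (-(L * t)) * (t * q t))
        = fun t => q 0 * (Real.exp (-(L * t)) * t)
            + Real.exp (-(L * t)) * (t * (q t - q 0)) := by
      funext t; ring
    rw [heq, intervalIntegral.integral_add ((hintJ L).const_mul _) (hintR L),
      intervalIntegral.integral_const_mul]
    ring
  simp only [hsplit]
  have h1 : Tendsto (fun L : ℝ => q 0 * (L ^ 2 * ∫ t in (0:ℝ)..1, Real.exp (-(L * t)) * t))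
      atTop (𝓝 (q 0 * 1)) := by
    apply Tendsto.const_mul
    have hev : ∀ᶠ L : ℝ in atTop,
        (1 : ℝ) - Real.exp (-L) * (L + 1) = L ^ 2 * ∫ t in (0:ℝ)..1, Real.exp (-(L * t)) * t := by
      filter_upwards [eventually_ge_atTop (1:ℝ)] with L hL
      have hL0 : L ≠ 0 := by linarith
      rw [integral_exp_neg_mul_id hL0]
      field_simp
    have hlim : Tendsto (fun L : ℝ => (1:ℝ) - Real.exp (-L) * (L + 1)) atTop (𝓝 1) := by
      have h2 : Tendsto (fun L : ℝ => L ^ 1 * Real.exp (-L) + Real.exp (-L)) atTop (𝓝 (0 + 0)) :=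
        (Real.tendsto_pow_mul_exp_neg_atTop_nhds_zero 1).add Real.tendsto_exp_neg_atTop_nhds_zero
      have h3 : Tendsto (fun L : ℝ => Real.exp (-L) * (L + 1)) atTop (𝓝 0) := by
        simpa using h2.congr (fun L => by ring)
      simpa using tendsto_const_nhds.sub h3
    exact hlim.congr' hev
  have h2 : Tendsto (fun L : ℝ =>
      L ^ 2 * ∫ t in (0:ℝ)..1, Real.exp (-(L * t)) * (t * (q t - q 0))) atTop (𝓝 0) := by
    rw [NormedAddCommGroup.tendsto_nhds_zero]
    intro ε hε
    have hc : ContinuousWithinAt q (Icc 0 1) 0 := hq 0 h01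
    rw [Metric.continuousWithinAt_iff] at hc
    obtain ⟨δ₀, hδ₀, hδc⟩ := hc (ε/4) (by positivity)
    set δ : ℝ := min (δ₀/2) 1 with hδdef
    have hδpos : 0 < δ := lt_min (by positivity) one_pos
    have hδ1 : δ ≤ 1 := min_le_right _ _
    have hδmem : δ ∈ Icc (0:ℝ) 1 := ⟨hδpos.le, hδ1⟩
    have hsmall : ∀ t ∈ Icc (0:ℝ) δ, |q t - q 0| ≤ ε/4 := by
      intro t ht
      have ht1 : t ∈ Icc (0:ℝ) 1 := ⟨ht.1, le_trans ht.2 hδ1⟩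
      have hd : dist t 0 < δ₀ := by
        rw [Real.dist_eq, sub_zero, abs_of_nonneg ht.1]
        have : δ ≤ δ₀/2 := min_le_left _ _
        linarith [ht.2]
      have := hδc ht1 hd
      rw [Real.dist_eq] at this
      linarith
    have htail : Tendsto (fun L : ℝ => M * (L ^ 2 * Real.exp (-(L * δ)))) atTop (𝓝 0) := by
      have hcomp : Tendsto (fun L : ℝ => (L * δ) ^ 2 * Real.exp (-(L * δ))) atTop (𝓝 0) :=
        (Real.tendsto_pow_mul_exp_neg_atTop_nhds_zero 2).comp
          (tendsto_id.atTop_mul_const hδpos)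
      have := (tendsto_const_nhds (x := M / δ ^ 2)).mul hcomp
      rw [mul_zero] at this
      apply this.congr
      intro L
      field_simp
    filter_upwards [eventually_ge_atTop (1:ℝ),
      htail.eventually_lt_const (show (0:ℝ) < ε/2 by positivity)] with L hL1 hLt
    have hL0 : (0:ℝ) < L := by linarith
    have hLne : L ≠ 0 := hL0.ne'
    set f : ℝ → ℝ := fun t => Real.exp (-(L * t)) * (t * (q t - q 0)) with hf
    have habs : |∫ t in (0:ℝ)..1, f t| ≤ ∫ t in (0:ℝ)..1, |f t| :=
      intervalIntegral.abs_integral_le_integral_abs zero_le_one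
    have hsum : (∫ t in (0:ℝ)..δ, |f t|) + ∫ t in δ..1, |f t| = ∫ t in (0:ℝ)..1, |f t| :=
      intervalIntegral.integral_add_adjacent_intervals
        (contOn_piece hq L h01 hδmem) (contOn_piece hq L hδmem h11)
    have hpart1 : (∫ t in (0:ℝ)..δ, |f t|) ≤ (1 - Real.exp (-(L*δ)) * (L*δ+1)) / L ^ 2 * (ε/4) := by
      have hmono : ∀ t ∈ Icc (0:ℝ) δ, |f t| ≤ Real.exp (-(L * t)) * t * (ε/4) := by
        intro t ht
        have ht0 : 0 ≤ t := ht.1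
        have hqb := hsmall t ht
        have he : (0:ℝ) < Real.exp (-(L * t)) := Real.exp_pos _
        rw [hf]
        rw [abs_mul, abs_mul, abs_of_pos he, abs_of_nonneg ht0]
        calc Real.exp (-(L * t)) * (t * |q t - q 0|)
            ≤ Real.exp (-(L * t)) * (t * (ε/4)) := by
              apply mul_le_mul_of_nonneg_left _ he.le
              exact mul_le_mul_of_nonneg_left hqb ht0
          _ = Real.exp (-(L * t)) * t * (ε/4) := by ring
      have hintJδ : IntervalIntegrable (fun t => Real.exp (-(L * t)) * t) volume 0 δ :=
        ((Real.continuous_exp.comp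
          ((continuous_const.mul continuous_id).neg)).mul continuous_id).intervalIntegrable _ _
      calc (∫ t in (0:ℝ)..δ, |f t|)
          ≤ ∫ t in (0:ℝ)..δ, Real.exp (-(L * t)) * t * (ε/4) :=
            intervalIntegral.integral_mono_on hδpos.le (contOn_piece hq L h01 hδmem)
              (hintJδ.mul_const _) hmono
        _ = (∫ t in (0:ℝ)..δ, Real.exp (-(L * t)) * t) * (ε/4) :=
            intervalIntegral.integral_mul_const _ _
        _ = (1 - Real.exp (-(L*δ)) * (L*δ+1)) / L ^ 2 * (ε/4) := by
            rw [integral_exp_neg_mul_id hLne]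
    have hpart2 : (∫ t in δ..1, |f t|) ≤ (1 - δ) * (Real.exp (-(L*δ)) * M) := by
      have hmono : ∀ t ∈ Icc δ 1, |f t| ≤ Real.exp (-(L*δ)) * M := by
        intro t ht
        have ht0 : 0 ≤ t := le_trans hδpos.le ht.1
        have ht1mem : t ∈ Icc (0:ℝ) 1 := ⟨ht0, ht.2⟩
        have he : Real.exp (-(L * t)) ≤ Real.exp (-(L * δ)) := by
          apply Real.exp_le_exp.2
          have : L * δ ≤ L * t := mul_le_mul_of_nonneg_left ht.1 hL0.le
          linarith
        have hqb : |q t - q 0| ≤ M := hM t ht1mem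
        rw [hf, abs_mul, abs_mul, abs_of_pos (Real.exp_pos _), abs_of_nonneg ht0]
        calc Real.exp (-(L * t)) * (t * |q t - q 0|)
            ≤ Real.exp (-(L * δ)) * (1 * M) := by
              apply mul_le_mul he _ (by positivity) (Real.exp_pos _).le
              exact mul_le_mul ht.2 hqb (abs_nonneg _) one_pos.le
          _ = Real.exp (-(L*δ)) * M := by ring
      calc (∫ t in δ..1, |f t|)
          ≤ ∫ t in δ..1, Real.exp (-(L*δ)) * M :=
            intervalIntegral.integral_mono_on hδ1 (contOn_piece hq L hδmem h11)
              intervalIntegrable_const hmono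
        _ = (1 - δ) * (Real.exp (-(L*δ)) * M) := by
            rw [intervalIntegral.integral_const, smul_eq_mul]
    have hLsq : (0:ℝ) < L ^ 2 := by positivity
    have hexpδ : (0:ℝ) ≤ Real.exp (-(L*δ)) * (L*δ+1) := by positivity
    have hA : (∫ t in (0:ℝ)..δ, |f t|) ≤ (1 / L ^ 2) * (ε/4) := by
      refine hpart1.trans ?_
      gcongr
      linarith
    have hinv : L ^ 2 * (1 / L ^ 2) = 1 := by field_simp
    have hkey : ∫ t in (0:ℝ)..1, |f t| ≤ (1 / L ^ 2) * (ε/4) + (1 - δ) * (Real.exp (-(L*δ)) * M) := by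
      rw [← hsum]; exact add_le_add hA hpart2
    have habs2 : ‖L ^ 2 * ∫ t in (0:ℝ)..1, f t‖ = L ^ 2 * |∫ t in (0:ℝ)..1, f t| := by
      rw [Real.norm_eq_abs, abs_mul, abs_of_nonneg (sq_nonneg L)]
    rw [habs2]
    have step : L ^ 2 * |∫ t in (0:ℝ)..1, f t|
        ≤ L ^ 2 * ((1 / L ^ 2) * (ε/4) + (1 - δ) * (Real.exp (-(L*δ)) * M)) :=
      mul_le_mul_of_nonneg_left (habs.trans hkey) hLsq.le
    refine step.trans_lt ?_
    have hepos : (0:ℝ) < Real.exp (-(L*δ)) := Real.exp_pos _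
    nlinarith [mul_nonneg (mul_nonneg (mul_nonneg hδpos.le hLsq.le) hepos.le) hM0,
      mul_nonneg (mul_nonneg hLsq.le hepos.le) hM0]
  have hfin := h1.add h2
  rw [mul_one, add_zero] at hfin
  exact hfin

lemma kker_hasDerivAt (μ : ℝ → ℝ) (hμ : ContinuousOn μ (Icc 0 1)) {s : ℝ} (hs : 0 < s) :
    HasDerivAt (kker μ)
      (∫ α in (0:ℝ)..1, -α * s ^ (-α - 1) * ((Real.Gamma (1 - α))⁻¹ * μ α)) s := by
  have hgc : Continuous fun α : ℝ => (Real.Gamma (1 - α))⁻¹ :=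
    continuous_gammaInv.comp (continuous_const.sub continuous_id)
  have hε : 0 < s / 2 := by positivity
  set a : ℝ := min (s / 2) 1 with ha
  have ha0 : 0 < a := lt_min hε one_pos
  have ha1 : a ≤ 1 := min_le_right _ _
  obtain ⟨M, hM⟩ := isCompact_Icc.exists_bound_of_continuousOn
    (show ContinuousOn (fun α => (Real.Gamma (1 - α))⁻¹ * μ α) (Icc 0 1) from
      hgc.continuousOn.mul hμ)
  have hM0 : 0 ≤ M := le_trans (norm_nonneg _) (hM 0 (by simp))
  have hball : ∀ x ∈ Metric.ball s (s/2), s/2 ≤ x ∧ 0 < x := by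
    intro x hx
    rw [Metric.mem_ball, Real.dist_eq, abs_sub_lt_iff] at hx
    constructor <;> linarith [hx.1, hx.2]
  have hrp : ∀ {x : ℝ}, 0 < x → ∀ {e : ℝ → ℝ}, Continuous e →
      Continuous (fun α : ℝ => x ^ (e α)) := by
    intro x hx e he
    have : (fun α : ℝ => x ^ (e α)) = fun α => Real.exp (Real.log x * e α) := by
      funext α; rw [Real.rpow_def_of_pos hx]
    rw [this]
    exact Real.continuous_exp.comp (continuous_const.mul he)
  have hFc : ∀ {x : ℝ}, 0 < x →
      ContinuousOn (fun α : ℝ => x ^ (-α) / Real.Gamma (1 - α) * μ α) (Icc 0 1) := by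
    intro x hx
    simp only [div_eq_mul_inv]
    exact (((hrp hx continuous_neg).continuousOn.mul hgc.continuousOn)).mul hμ
  have main := intervalIntegral.hasDerivAt_integral_of_dominated_loc_of_deriv_le
    (F := fun x α => x ^ (-α) / Real.Gamma (1 - α) * μ α)
    (F' := fun x α => -α * x ^ (-α - 1) * ((Real.Gamma (1 - α))⁻¹ * μ α))
    (bound := fun _ => a ^ (-(2:ℝ)) * M) (a := 0) (b := 1) (x₀ := s)
    (μ := MeasureTheory.volume) (Metric.ball_mem_nhds s hε) ?_ ?_ ?_ ?_ ?_ ?_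
  · exact main.2
  · filter_upwards [Metric.ball_mem_nhds s hε] with x hx
    rw [uIoc_of_le (zero_le_one' ℝ)]
    exact ((hFc (hball x hx).2).mono Ioc_subset_Icc_self).aestronglyMeasurable measurableSet_Ioc
  · apply ContinuousOn.intervalIntegrable
    rw [uIcc_of_le (zero_le_one' ℝ)]
    exact hFc hs
  · rw [uIoc_of_le (zero_le_one' ℝ)]
    apply ContinuousOn.aestronglyMeasurable _ measurableSet_Ioc
    apply ContinuousOn.mono _ Ioc_subset_Icc_self
    exact (continuous_neg.continuousOn.mul
        (hrp hs (continuous_neg.sub continuous_const)).continuousOn).mul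
      (hgc.continuousOn.mul hμ)
  · apply Eventually.of_forall
    intro α hα x hx
    rw [uIoc_of_le (zero_le_one' ℝ)] at hα
    obtain ⟨hxl, hx0⟩ := hball x hx
    have hα0 : 0 < α := hα.1
    have hα1 : α ≤ 1 := hα.2
    have hax : a ≤ x := le_trans (min_le_left _ _) hxl
    have b1 : x ^ (-α - 1) ≤ a ^ (-(2:ℝ)) :=
      le_trans (Real.rpow_le_rpow_of_nonpos ha0 hax (by linarith))
        (Real.rpow_le_rpow_of_exponent_ge ha0 ha1 (by linarith))
    have b2 : |(Real.Gamma (1 - α))⁻¹ * μ α| ≤ M := hM α ⟨hα0.le, hα1⟩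
    have p0 : 0 ≤ x ^ (-α - 1) := (Real.rpow_pos_of_pos hx0 _).le
    have m0 : 0 ≤ |(Real.Gamma (1 - α))⁻¹ * μ α| := abs_nonneg _
    rw [Real.norm_eq_abs, abs_mul, abs_mul, abs_neg, abs_of_pos hα0,
      abs_of_nonneg p0]
    have step := mul_le_mul (mul_le_mul hα1 b1 p0 zero_le_one) b2 m0
      (by positivity : (0:ℝ) ≤ 1 * a ^ (-(2:ℝ)))
    rw [one_mul] at step
    exact step
  · exact intervalIntegrable_const
  · apply Eventually.of_forall
    intro α hα x hx
    have hx0 : 0 < x := (hball x hx).2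
    have h := (Real.hasDerivAt_rpow_const (p := -α) (Or.inl hx0.ne')).mul_const
      ((Real.Gamma (1 - α))⁻¹ * μ α)
    exact h.congr_of_eventuallyEq (Eventually.of_forall fun y => by
      simp only [div_eq_mul_inv, mul_assoc])

end KkerAux

theorem kker_deriv_asymp_at_zero (μ : ℝ → ℝ)
    (hC3 : ContDiffOn ℝ 3 μ (Set.Icc 0 1))
    (hnn : ∀ α ∈ Set.Icc (0:ℝ) 1, 0 ≤ μ α)
    (hne : ∃ α ∈ Set.Icc (0:ℝ) 1, μ α ≠ 0)
    (h1 : μ 1 ≠ 0) :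
    (∀ s : ℝ, 0 < s → DifferentiableAt ℝ (kker μ) s) ∧
    Tendsto (fun s : ℝ => s ^ 2 * (Real.log s) ^ 2 * deriv (kker μ) s)
      (nhdsWithin 0 (Set.Ioi 0)) (nhds (-(μ 1))) := by
  have hμc : ContinuousOn μ (Icc 0 1) := hC3.continuousOn
  constructor
  · intro s hs; exact (kker_hasDerivAt μ hμc hs).differentiableAt
  · set q : ℝ → ℝ := fun t => (1 - t) * μ (1 - t) * (Real.Gamma (t + 1))⁻¹ with hqdef
    have hqc : ContinuousOn q (Icc 0 1) := by
      apply ContinuousOn.mul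
      apply ContinuousOn.mul
      · exact (continuous_const.sub continuous_id).continuousOn
      · exact hμc.comp (continuous_const.sub continuous_id).continuousOn
          (fun t ht => ⟨by linarith [ht.2], by linarith [ht.1]⟩)
      · exact (continuous_gammaInv.comp (continuous_id.add continuous_const)).continuousOn
    have hq0 : q 0 = μ 1 := by simp [hqdef, Real.Gamma_one]
    have hL : Tendsto (fun s : ℝ => -Real.log s) (nhdsWithin 0 (Set.Ioi 0)) atTop :=
      tendsto_neg_atBot_atTop.comp Real.tendsto_log_nhdsGT_zero
    have hG : Tendsto (fun s : ℝ => (-Real.log s) ^ 2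
        * ∫ t in (0:ℝ)..1, Real.exp (-(-Real.log s * t)) * (t * q t))
        (nhdsWithin 0 (Set.Ioi 0)) (nhds (μ 1)) := by
      have := (laplace_main hqc).comp hL
      rw [hq0] at this
      exact this
    have hGneg := hG.neg
    refine Tendsto.congr' ?_ hGneg
    filter_upwards [self_mem_nhdsWithin] with s hs
    have hs0 : 0 < s := hs
    have hderiv : deriv (kker μ) s
        = ∫ α in (0:ℝ)..1, -α * s ^ (-α - 1) * ((Real.Gamma (1 - α))⁻¹ * μ α) :=
      (kker_hasDerivAt μ hμc hs0).deriv
    set w : ℝ → ℝ := fun α => s ^ (1 - α) * (α * ((Real.Gamma (1 - α))⁻¹ * μ α)) with hw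
    have h1' : (fun t : ℝ => Real.exp (-(-Real.log s * t)) * (t * q t)) = fun t => w (1 - t) := by
      funext t
      rw [hw, hqdef]
      simp only [sub_sub_cancel]
      rw [Real.rpow_def_of_pos hs0, gammaInv_eq t]
      have hexp : -(-Real.log s * t) = Real.log s * t := by ring
      rw [hexp]
      ring
    have h2' : (∫ t in (0:ℝ)..1, w (1 - t)) = ∫ α in (0:ℝ)..1, w α := by
      simpa using intervalIntegral.integral_comp_sub_left w 1
    have h3' : (fun α : ℝ => -α * s ^ (-α - 1) * ((Real.Gamma (1 - α))⁻¹ * μ α))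
        = fun α => -s ^ (-(2:ℝ)) * w α := by
      funext α
      rw [hw]
      simp only
      have hx : s ^ (-(2:ℝ)) * s ^ (1 - α) = s ^ (-α - 1) := by
        rw [← Real.rpow_add hs0, show (-(2:ℝ) + (1 - α)) = -α - 1 by ring]
      rw [← hx]
      ring
    have h5' : s ^ 2 * s ^ (-(2:ℝ)) = 1 := by
      rw [← Real.rpow_natCast s 2, ← Real.rpow_add hs0]
      norm_num
    have h4' : deriv (kker μ) s = -s ^ (-(2:ℝ)) * ∫ α in (0:ℝ)..1, w α := by
      rw [hderiv, h3', intervalIntegral.integral_const_mul]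
    show -((-Real.log s) ^ 2 * ∫ t in (0:ℝ)..1, Real.exp (-(-Real.log s * t)) * (t * q t))
        = s ^ 2 * Real.log s ^ 2 * deriv (kker μ) s
    rw [h1', h2', h4', neg_sq]
    linear_combination (Real.log s ^ 2 * ∫ α in (0:ℝ)..1, w α) * h5'
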